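/- Let H be a finite-dimensional real inner product space, V a subspace with V ∩ ker(Λ) = {0}, Λ : H → ℝ^m linear, and ε, η > 0. Then (sup{‖h‖ : ‖P_{V⊥}h‖ ≤ ε, ‖Λh‖ ≤ η})² equals the minimum of cε² + dη² over all c, d ≥ 0 such that c P_{V⊥} + d Λ*Λ ⪰ Id. -/

import Mathlib

open scoped RealInnerProductSpace

section helpers
variable {E : Type*} [NormedAddCommGroup E] [InnerProductSpace ℝ E] [FiniteDimensional ℝ E]
variable {F₁ : Type*} [NormedAddCommGroup F₁] [InnerProductSpace ℝ F₁]
variable {F₂ : Type*} [NormedAddCommGroup F₂] [InnerProductSpace ℝ F₂]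

lemma exists_min_on_sphere [Nontrivial E] (f : E → ℝ) (hf : Continuous f) :
    ∃ x : E, ‖x‖ = 1 ∧ ∀ y : E, ‖y‖ = 1 → f x ≤ f y := by
  obtain ⟨x, hx, hmin⟩ := (isCompact_sphere (0:E) 1).exists_isMinOn
    (NormedSpace.sphere_nonempty.mpr zero_le_one) hf.continuousOn
  refine ⟨x, by simpa using hx, fun y hy => hmin ?_⟩
  simpa [mem_sphere_zero_iff_norm] using hy

lemma danskin [Nontrivial E] (B : E →L[ℝ] F₁) (C : E →L[ℝ] F₂) (t μ : ℝ) (ht1 : t < 1)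
    (hmin : ∀ x : E, ‖x‖ = 1 → μ ≤ t * ‖B x‖^2 + (1-t) * ‖C x‖^2)
    (hmax : ∀ s, t < s → s ≤ 1 → ∃ x : E, ‖x‖ = 1 ∧ s * ‖B x‖^2 + (1-s) * ‖C x‖^2 ≤ μ) :
    ∃ h : E, ‖h‖ = 1 ∧ t * ‖B h‖^2 + (1-t) * ‖C h‖^2 = μ ∧ ‖B h‖^2 ≤ ‖C h‖^2 := by
  by_contra hcon
  push_neg at hcon
  set L : ℝ := ‖B‖^2 + ‖C‖^2 with hL
  have hL0 : 0 ≤ L := by positivity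
  have hbd : ∀ x : E, ‖x‖ = 1 → |‖B x‖^2 - ‖C x‖^2| ≤ L := by
    intro x hx
    have h1 : ‖B x‖ ≤ ‖B‖ := by simpa [hx] using B.le_opNorm x
    have h2 : ‖C x‖ ≤ ‖C‖ := by simpa [hx] using C.le_opNorm x
    have h1' : ‖B x‖^2 ≤ ‖B‖^2 := pow_le_pow_left₀ (norm_nonneg _) h1 2
    have h2' : ‖C x‖^2 ≤ ‖C‖^2 := pow_le_pow_left₀ (norm_nonneg _) h2 2
    have hb0 : (0:ℝ) ≤ ‖B x‖^2 := by positivity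
    have hc0 : (0:ℝ) ≤ ‖C x‖^2 := by positivity
    rw [abs_le]; constructor <;> nlinarith
  -- uniform gap δ on the "bad" set K
  have hgap : ∃ δ : ℝ, 0 < δ ∧ ∀ x : E, ‖x‖ = 1 → ‖B x‖^2 ≤ ‖C x‖^2 →
      μ + δ ≤ t * ‖B x‖^2 + (1-t) * ‖C x‖^2 := by
    set K : Set E := {x : E | ‖x‖ = 1 ∧ ‖B x‖^2 ≤ ‖C x‖^2} with hK
    have hcb : Continuous fun x : E => ‖B x‖^2 := (B.continuous.norm).pow 2
    have hcc : Continuous fun x : E => ‖C x‖^2 := (C.continuous.norm).pow 2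
    have hcg : Continuous fun x : E => t * ‖B x‖^2 + (1-t) * ‖C x‖^2 :=
      ((continuous_const.mul hcb).add (continuous_const.mul hcc))
    rcases Set.eq_empty_or_nonempty K with hKe | hKne
    · refine ⟨1, one_pos, fun x hx hbc => ?_⟩
      exfalso
      have : x ∈ K := ⟨hx, hbc⟩
      simp [hKe] at this
    · have hKc : IsCompact K := by
        refine (isCompact_sphere (0:E) 1).of_isClosed_subset ?_ ?_
        · have h1 : IsClosed {x : E | ‖x‖ = 1} := isClosed_eq continuous_norm continuous_const
          have h2 : IsClosed {x : E | ‖B x‖^2 ≤ ‖C x‖^2} := isClosed_le hcb hcc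
          simpa [hK, Set.setOf_and] using h1.inter h2
        · intro x hx; simpa [mem_sphere_zero_iff_norm] using hx.1
      obtain ⟨z, hzK, hzmin⟩ := hKc.exists_isMinOn hKne hcg.continuousOn
      have hz1 : ‖z‖ = 1 := hzK.1
      have hzgt : μ < t * ‖B z‖^2 + (1-t) * ‖C z‖^2 := by
        rcases lt_or_eq_of_le (hmin z hz1) with h | h
        · exact h
        · exact absurd hzK.2 (not_le.mpr (hcon z hz1 h.symm))
      refine ⟨_, sub_pos.mpr hzgt, fun x hx hbc => ?_⟩
      have h9 := hzmin (show x ∈ K from ⟨hx, hbc⟩)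
      simp only [Set.mem_setOf_eq] at h9
      simp only [add_sub_cancel]
      linarith [h9]
  obtain ⟨δ, hδ, hKgap⟩ := hgap
  -- pick s slightly above t
  set e : ℝ := min ((1-t)/2) (δ/(2*(L+1))) with he
  have he0 : 0 < e := by
    apply lt_min (by linarith) (by positivity)
  have hs1 : t + e ≤ 1 := by
    have : e ≤ (1-t)/2 := min_le_left _ _
    linarith
  obtain ⟨x, hx1, hxle⟩ := hmax (t + e) (by linarith) hs1
  have hkey : (t+e) * ‖B x‖^2 + (1-(t+e)) * ‖C x‖^2
      = t * ‖B x‖^2 + (1-t) * ‖C x‖^2 + e * (‖B x‖^2 - ‖C x‖^2) := by ring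
  rcases le_or_gt (‖B x‖^2) (‖C x‖^2) with hc | hc
  · -- x ∈ K : use gap
    have h1 := hKgap x hx1 hc
    have h2 : |‖B x‖^2 - ‖C x‖^2| ≤ L := hbd x hx1
    have h3 : e * (‖B x‖^2 - ‖C x‖^2) ≥ -(e * L) := by
      have := (abs_le.mp h2).1
      nlinarith
    have h4 : e * L ≤ δ/2 := by
      have h5 : e ≤ δ/(2*(L+1)) := min_le_right _ _
      have h6 : e * L ≤ δ/(2*(L+1)) * L := by nlinarith
      have h7 : δ/(2*(L+1)) * L ≤ δ/2 := by
        rw [div_mul_eq_mul_div, div_le_div_iff₀ (by positivity) (by positivity)]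
        nlinarith
      linarith
    nlinarith [hxle, hkey]
  · -- strict increase
    have h1 := hmin x hx1
    nlinarith [hxle, hkey]

lemma combine (B : E →L[ℝ] F₁) (C : E →L[ℝ] F₂) (t μ : ℝ)
    (hGlobal : ∀ x : E, μ * ‖x‖^2 ≤ t * ‖B x‖^2 + (1-t) * ‖C x‖^2)
    (h₁ h₂ : E) (hn1 : ‖h₁‖ = 1) (hn2 : ‖h₂‖ = 1)
    (he1 : t * ‖B h₁‖^2 + (1-t) * ‖C h₁‖^2 = μ)
    (he2 : t * ‖B h₂‖^2 + (1-t) * ‖C h₂‖^2 = μ)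
    (hd1 : ‖C h₁‖^2 ≤ ‖B h₁‖^2) (hd2 : ‖B h₂‖^2 ≤ ‖C h₂‖^2) :
    ∃ h : E, ‖h‖ = 1 ∧ t * ‖B h‖^2 + (1-t) * ‖C h‖^2 = μ ∧ ‖B h‖^2 = ‖C h‖^2 := by
  set φ : E → ℝ := fun x => t * ‖B x‖^2 + (1-t) * ‖C x‖^2 - μ * ‖x‖^2 with hφ
  set ψ : E → E → ℝ := fun x y => t * ⟪B x, B y⟫ + (1-t) * ⟪C x, C y⟫ - μ * ⟪x, y⟫ with hψ
  have hφ0 : ∀ x, 0 ≤ φ x := fun x => by simp only [hφ]; linarith [hGlobal x]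
  have hexp : ∀ x y : E, φ (x + y) = φ x + φ y + 2 * ψ x y := by
    intro x y
    simp only [hφ, hψ, map_add]
    rw [norm_add_sq_real (B x), norm_add_sq_real (C x), norm_add_sq_real x]
    ring
  have hφsmul : ∀ (a : ℝ) (x : E), φ (a • x) = a^2 * φ x := by
    intro a x
    simp only [hφ, map_smul, norm_smul, mul_pow, Real.norm_eq_abs, sq_abs]
    ring
  have hψsmul : ∀ (a : ℝ) (x y : E), ψ x (a • y) = a * ψ x y := by
    intro a x y
    simp only [hψ, map_smul, real_inner_smul_right]
    ring
  have hφ1 : φ h₁ = 0 := by simp only [hφ, hn1]; rw [he1]; ring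
  have hφ2 : φ h₂ = 0 := by simp only [hφ, hn2]; rw [he2]; ring
  have hψ12 : ψ h₁ h₂ = 0 := by
    have hp := hφ0 (h₁ + h₂)
    have hm := hφ0 (h₁ + (-1 : ℝ) • h₂)
    rw [hexp, hφ1, hφ2] at hp
    rw [hexp, hφ1, hφsmul, hψsmul, hφ2] at hm
    nlinarith
  -- handle degenerate cases h₂ = ±h₁
  by_cases hcase1 : h₁ = h₂
  · exact ⟨h₁, hn1, he1, le_antisymm (hcase1 ▸ hd2) hd1⟩
  by_cases hcase2 : h₁ = -h₂
  · refine ⟨h₁, hn1, he1, le_antisymm ?_ hd1⟩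
    have : ‖B h₁‖ = ‖B h₂‖ := by rw [hcase2, map_neg, norm_neg]
    have h2' : ‖C h₁‖ = ‖C h₂‖ := by rw [hcase2, map_neg, norm_neg]
    rw [this, h2']; exact hd2
  -- |⟪h₁,h₂⟫| < 1
  have hin1 : ⟪h₁, h₂⟫ < 1 := (inner_lt_one_iff_real_of_norm_eq_one hn1 hn2).mpr hcase1
  have hin2 : -1 < ⟪h₁, h₂⟫ := by
    have := (inner_lt_one_iff_real_of_norm_eq_one hn1 (by rw [norm_neg]; exact hn2)).mpr hcase2
    rw [inner_neg_right] at this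
    linarith
  set p : ℝ → E := fun θ => Real.cos θ • h₁ + Real.sin θ • h₂ with hp
  have hpnorm : ∀ θ, ‖p θ‖^2 = 1 + 2 * Real.cos θ * Real.sin θ * ⟪h₁, h₂⟫ := by
    intro θ
    rw [hp]
    simp only
    rw [norm_add_sq_real, norm_smul, norm_smul, real_inner_smul_left, real_inner_smul_right]
    simp only [Real.norm_eq_abs, mul_pow, sq_abs, hn1, hn2]
    nlinarith [Real.sin_sq_add_cos_sq θ]
  have hppos : ∀ θ, θ ∈ Set.Icc 0 (Real.pi/2) → 0 < ‖p θ‖^2 := by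
    intro θ hθ
    have hc := Real.cos_nonneg_of_mem_Icc (Set.mem_Icc.mpr ⟨by linarith [hθ.1, Real.pi_pos], hθ.2⟩)
    have hs := Real.sin_nonneg_of_nonneg_of_le_pi hθ.1 (by linarith [hθ.2, Real.pi_pos])
    have hcs := Real.sin_sq_add_cos_sq θ
    rw [hpnorm]
    rcases eq_or_lt_of_le (mul_nonneg hc hs) with h | h
    · nlinarith [h.symm]
    · nlinarith [mul_pos h (show (0:ℝ) < ⟪h₁,h₂⟫ + 1 by linarith),
        sq_nonneg (Real.cos θ - Real.sin θ)]
  have hDcont : Continuous fun θ => ‖B (p θ)‖^2 - ‖C (p θ)‖^2 := by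
    have hpc : Continuous p :=
      (Real.continuous_cos.smul continuous_const).add (Real.continuous_sin.smul continuous_const)
    exact ((B.continuous.comp hpc).norm.pow 2).sub ((C.continuous.comp hpc).norm.pow 2)
  have hD0 : (fun θ => ‖B (p θ)‖^2 - ‖C (p θ)‖^2) (Real.pi/2) ≤ 0 := by
    simp only [hp, Real.cos_pi_div_two, Real.sin_pi_div_two, zero_smul, one_smul, zero_add]
    linarith
  have hD1 : 0 ≤ (fun θ => ‖B (p θ)‖^2 - ‖C (p θ)‖^2) 0 := by
    simp only [hp, Real.cos_zero, Real.sin_zero, zero_smul, one_smul, add_zero]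
    linarith
  have hivt := intermediate_value_Icc' (by positivity : (0:ℝ) ≤ Real.pi/2) hDcont.continuousOn
  obtain ⟨θ₀, hθ₀mem, hθ₀⟩ := hivt (Set.mem_Icc.mpr ⟨hD0, hD1⟩)
  set q : E := p θ₀ with hq
  have hq0 : q ≠ 0 := by
    intro h
    have := hppos θ₀ hθ₀mem
    rw [← hq, h] at this; simp at this
  have hqn : ‖q‖ ≠ 0 := norm_ne_zero_iff.mpr hq0
  refine ⟨‖q‖⁻¹ • q, ?_, ?_, ?_⟩
  · rw [norm_smul, Real.norm_eq_abs, abs_inv, abs_norm, inv_mul_cancel₀ hqn]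
  · -- φ q = 0
    have hφq : φ q = 0 := by
      have : q = Real.cos θ₀ • h₁ + Real.sin θ₀ • h₂ := rfl
      rw [this, hexp, hφsmul, hφsmul, hψsmul]
      have hψ' : ψ (Real.cos θ₀ • h₁) h₂ = Real.cos θ₀ * ψ h₁ h₂ := by
        simp only [hψ, map_smul, real_inner_smul_left]; ring
      rw [hψ', hψ12, hφ1, hφ2]; ring
    have hφh : φ (‖q‖⁻¹ • q) = 0 := by rw [hφsmul, hφq, mul_zero]
    have hnh : ‖(‖q‖⁻¹ • q)‖ = 1 := by
      rw [norm_smul, Real.norm_eq_abs, abs_inv, abs_norm, inv_mul_cancel₀ hqn]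
    simp only [hφ, hnh] at hφh
    linarith
  · -- equality of the two forms
    have hbq : ‖B q‖^2 = ‖C q‖^2 := by
      have : ‖B (p θ₀)‖^2 - ‖C (p θ₀)‖^2 = 0 := hθ₀
      linarith [this]
    have e1 : ‖B (‖q‖⁻¹ • q)‖^2 = ‖q‖⁻¹^2 * ‖B q‖^2 := by
      rw [map_smul, norm_smul, Real.norm_eq_abs, abs_inv, abs_norm, mul_pow]
    have e2 : ‖C (‖q‖⁻¹ • q)‖^2 = ‖q‖⁻¹^2 * ‖C q‖^2 := by
      rw [map_smul, norm_smul, Real.norm_eq_abs, abs_inv, abs_norm, mul_pow]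
    rw [e1, e2, hbq]


lemma core [Nontrivial E] (B : E →L[ℝ] F₁) (C : E →L[ℝ] F₂)
    (hpos : ∀ x : E, x ≠ 0 → 0 < ‖B x‖^2 + ‖C x‖^2) :
    ∃ (t μ : ℝ) (h : E), 0 ≤ t ∧ t ≤ 1 ∧ 0 < μ ∧ ‖h‖ = 1 ∧
      (∀ x : E, μ * ‖x‖^2 ≤ t * ‖B x‖^2 + (1-t) * ‖C x‖^2) ∧
      ‖B h‖^2 ≤ μ ∧ ‖C h‖^2 ≤ μ := by
  set g : ℝ → E → ℝ := fun t x => t * ‖B x‖^2 + (1-t) * ‖C x‖^2 with hg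
  have hgc : ∀ t, Continuous (g t) := fun t =>
    (continuous_const.mul ((B.continuous.norm).pow 2)).add
      (continuous_const.mul ((C.continuous.norm).pow 2))
  set μf : ℝ → ℝ := fun t => sInf (g t '' Metric.sphere (0:E) 1) with hμf
  have hmu : ∀ t : ℝ, ∃ x : E, ‖x‖ = 1 ∧ g t x = μf t ∧ ∀ y : E, ‖y‖ = 1 → μf t ≤ g t y := by
    intro t
    obtain ⟨x, hx1, hxmin⟩ := exists_min_on_sphere (g t) (hgc t)
    have hls : IsLeast (g t '' Metric.sphere (0:E) 1) (g t x) := by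
      constructor
      · exact ⟨x, by simpa [mem_sphere_zero_iff_norm] using hx1, rfl⟩
      · rintro v ⟨y, hy, rfl⟩
        exact hxmin y (by simpa [mem_sphere_zero_iff_norm] using hy)
    have heq : μf t = g t x := hls.csInf_eq
    exact ⟨x, hx1, heq.symm, fun y hy => heq ▸ hxmin y hy⟩
  -- Lipschitz bound on sphere values
  set L : ℝ := ‖B‖^2 + ‖C‖^2 with hL
  have hL0 : 0 ≤ L := by positivity
  have hbd : ∀ x : E, ‖x‖ = 1 → |‖B x‖^2 - ‖C x‖^2| ≤ L := by
    intro x hx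
    have h1 : ‖B x‖ ≤ ‖B‖ := by simpa [hx] using B.le_opNorm x
    have h2 : ‖C x‖ ≤ ‖C‖ := by simpa [hx] using C.le_opNorm x
    have h1' : ‖B x‖^2 ≤ ‖B‖^2 := pow_le_pow_left₀ (norm_nonneg _) h1 2
    have h2' : ‖C x‖^2 ≤ ‖C‖^2 := pow_le_pow_left₀ (norm_nonneg _) h2 2
    have hb0 : (0:ℝ) ≤ ‖B x‖^2 := by positivity
    have hc0 : (0:ℝ) ≤ ‖C x‖^2 := by positivity
    rw [abs_le]; constructor <;> nlinarith
  have hlip : ∀ t s : ℝ, μf t ≤ μf s + L * |t - s| := by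
    intro t s
    obtain ⟨xs, hxs1, hxseq, _⟩ := hmu s
    obtain ⟨_, _, _, hlbt⟩ := hmu t
    have h1 : μf t ≤ g t xs := hlbt xs hxs1
    have h2 : g t xs = g s xs + (t - s) * (‖B xs‖^2 - ‖C xs‖^2) := by simp only [hg]; ring
    have h3 : (t - s) * (‖B xs‖^2 - ‖C xs‖^2) ≤ |t - s| * L := by
      calc (t - s) * (‖B xs‖^2 - ‖C xs‖^2) ≤ |(t - s) * (‖B xs‖^2 - ‖C xs‖^2)| := le_abs_self _
        _ = |t - s| * |‖B xs‖^2 - ‖C xs‖^2| := abs_mul _ _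
        _ ≤ |t - s| * L := by
            have := hbd xs hxs1
            exact mul_le_mul_of_nonneg_left this (abs_nonneg _)
    rw [hxseq] at h2
    linarith [h1, h2.le, h3]
  have hμcont : Continuous μf := by
    apply LipschitzWith.continuous (K := Real.toNNReal L)
    apply LipschitzWith.of_dist_le_mul
    intro t s
    rw [Real.dist_eq, Real.dist_eq, abs_sub_le_iff]
    have l1 := hlip t s
    have l2 := hlip s t
    rw [abs_sub_comm] at l2
    have hLle : L ≤ (Real.toNNReal L : ℝ) := Real.le_coe_toNNReal L
    have habs : (0:ℝ) ≤ |t - s| := abs_nonneg _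
    constructor <;> nlinarith
  -- maximize over [0,1]
  obtain ⟨tS, htSmem, htSmax⟩ := isCompact_Icc.exists_isMaxOn (α := ℝ)
    (Set.nonempty_Icc.mpr zero_le_one) hμcont.continuousOn
  have htS0 : 0 ≤ tS := htSmem.1
  have htS1 : tS ≤ 1 := htSmem.2
  set μS : ℝ := μf tS with hμS
  have hmaxf : ∀ s : ℝ, 0 ≤ s → s ≤ 1 → μf s ≤ μS := fun s h0 h1 =>
    htSmax (Set.mem_Icc.mpr ⟨h0, h1⟩)
  -- positivity
  have hμSpos : 0 < μS := by
    obtain ⟨xh, hxh1, hxheq, _⟩ := hmu (1/2)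
    have hpos' : 0 < g (1/2) xh := by
      have hx0 : xh ≠ 0 := by intro h; rw [h] at hxh1; simp at hxh1
      have := hpos xh hx0
      simp only [hg]; nlinarith
    have := hmaxf (1/2) (by norm_num) (by norm_num)
    rw [← hxheq] at this
    linarith
  -- global lower bound
  have hGlobal : ∀ x : E, μS * ‖x‖^2 ≤ tS * ‖B x‖^2 + (1-tS) * ‖C x‖^2 := by
    intro x
    rcases eq_or_ne x 0 with rfl | hx0
    · simp
    · have hn0 : ‖x‖ ≠ 0 := norm_ne_zero_iff.mpr hx0
      set u : E := ‖x‖⁻¹ • x with hu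
      have hu1 : ‖u‖ = 1 := by
        rw [hu, norm_smul, Real.norm_eq_abs, abs_inv, abs_norm, inv_mul_cancel₀ hn0]
      obtain ⟨_, _, _, hlb⟩ := hmu tS
      have h1 : μS ≤ g tS u := hlb u hu1
      have e1 : ‖B u‖^2 = ‖x‖⁻¹^2 * ‖B x‖^2 := by
        rw [hu, map_smul, norm_smul, Real.norm_eq_abs, abs_inv, abs_norm, mul_pow]
      have e2 : ‖C u‖^2 = ‖x‖⁻¹^2 * ‖C x‖^2 := by
        rw [hu, map_smul, norm_smul, Real.norm_eq_abs, abs_inv, abs_norm, mul_pow]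
      simp only [hg, e1, e2] at h1
      have hn2 : 0 < ‖x‖^2 := by positivity
      have hinv : ‖x‖⁻¹^2 = (‖x‖^2)⁻¹ := by rw [inv_pow]
      rw [hinv] at h1
      calc μS * ‖x‖^2 ≤ (tS * ((‖x‖^2)⁻¹ * ‖B x‖^2) + (1-tS) * ((‖x‖^2)⁻¹ * ‖C x‖^2)) * ‖x‖^2 :=
            mul_le_mul_of_nonneg_right h1 hn2.le
        _ = tS * ‖B x‖^2 + (1-tS) * ‖C x‖^2 := by field_simp
  -- Danskin: right direction hypothesis factory
  have hmaxd : ∀ s, tS < s → s ≤ 1 → ∃ x : E, ‖x‖ = 1 ∧ s * ‖B x‖^2 + (1-s) * ‖C x‖^2 ≤ μS := by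
    intro s hs h1
    obtain ⟨x, hx1, hxeq, _⟩ := hmu s
    refine ⟨x, hx1, ?_⟩
    have h2 : g s x ≤ μS := by rw [hxeq]; exact hmaxf s (by linarith) h1
    simpa only [hg] using h2
  have hmind : ∀ x : E, ‖x‖ = 1 → μS ≤ tS * ‖B x‖^2 + (1-tS) * ‖C x‖^2 := by
    intro x hx
    obtain ⟨_, _, _, hlb⟩ := hmu tS
    exact hlb x hx
  rcases eq_or_lt_of_le htS1 with htop | htlt1
  · -- tS = 1 : use left (swapped) danskin
    have hmind' : ∀ x : E, ‖x‖ = 1 → μS ≤ (1-tS) * ‖C x‖^2 + (1-(1-tS)) * ‖B x‖^2 := by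
      intro x hx; have := hmind x hx; linarith [this]
    have hswap : ∀ s, 1 - tS < s → s ≤ 1 →
        ∃ x : E, ‖x‖ = 1 ∧ s * ‖C x‖^2 + (1-s) * ‖B x‖^2 ≤ μS := by
      intro s hs h1
      obtain ⟨x, hx1, hxeq, _⟩ := hmu (1-s)
      refine ⟨x, hx1, ?_⟩
      have : g (1-s) x ≤ μS := by rw [hxeq]; exact hmaxf (1-s) (by linarith) (by linarith)
      simp only [hg] at this; linarith [this]
    obtain ⟨h, hh1, hheq, hhle⟩ := danskin C B (1-tS) μS (by linarith)
      (by intro x hx; have := hmind x hx; linarith)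
      hswap
    have h5 : tS * ‖B h‖^2 + (1-tS) * ‖C h‖^2 = μS := by linarith [hheq]
    rw [htop] at h5
    simp only [one_mul, sub_self, zero_mul, add_zero] at h5
    exact ⟨tS, μS, h, htS0, htS1, hμSpos, hh1, hGlobal, by linarith, by linarith⟩
  · -- tS < 1 : right danskin gives h₂
    obtain ⟨h₂, hh21, hh2eq, hh2le⟩ := danskin B C tS μS htlt1 hmind hmaxd
    rcases eq_or_lt_of_le htS0 with hbot | htgt0
    · -- tS = 0
      have h5 := hh2eq
      rw [← hbot] at h5
      simp only [zero_mul, sub_zero, one_mul, zero_add] at h5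
      exact ⟨tS, μS, h₂, htS0, htS1, hμSpos, hh21, hGlobal, by linarith, by linarith⟩
    · -- interior: left danskin gives h₁
      have hswap : ∀ s, 1 - tS < s → s ≤ 1 →
          ∃ x : E, ‖x‖ = 1 ∧ s * ‖C x‖^2 + (1-s) * ‖B x‖^2 ≤ μS := by
        intro s hs h1
        obtain ⟨x, hx1, hxeq, _⟩ := hmu (1-s)
        refine ⟨x, hx1, ?_⟩
        have : g (1-s) x ≤ μS := by rw [hxeq]; exact hmaxf (1-s) (by linarith) (by linarith)
        simp only [hg] at this; linarith [this]
      obtain ⟨h₁, hh11, hh1eq, hh1le⟩ := danskin C B (1-tS) μS (by linarith)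
        (by intro x hx; have := hmind x hx; linarith)
        hswap
      have hh1eq' : tS * ‖B h₁‖^2 + (1-tS) * ‖C h₁‖^2 = μS := by linarith [hh1eq]
      obtain ⟨h, hh1', hheq', hbc⟩ := combine B C tS μS hGlobal h₁ h₂ hh11 hh21
        hh1eq' hh2eq hh1le hh2le
      refine ⟨tS, μS, h, htS0, htS1, hμSpos, hh1', hGlobal, ?_, ?_⟩
      · nlinarith [hheq', hbc]
      · nlinarith [hheq', hbc]

end helpers


lemma aux_div (u v w z : ℝ) (hw : w ≠ 0) (hz : z ≠ 0) :
    (u * (w⁻¹^2 * v))/z = u/(w^2*z)*v := by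
  field_simp
  try ring

lemma aux_val (t ε η μ : ℝ) (hε : ε ≠ 0) (hη : η ≠ 0) (hμ : μ ≠ 0) :
    μ⁻¹ = t/(ε^2*μ)*ε^2 + (1-t)/(η^2*μ)*η^2 := by
  field_simp
  try ring

set_option maxHeartbeats 4000000 in
/-- The squared lower bound equals the optimal value of the semidefinite program
`min cε² + dη²` subject to `c P_{V⊥} + d Λ*Λ ⪰ Id`, `c, d ≥ 0`. -/

theorem stmt_13
    {H : Type*} [NormedAddCommGroup H] [InnerProductSpace ℝ H] [FiniteDimensional ℝ H]
    (hdim : 3 ≤ Module.finrank ℝ H)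
    {m : ℕ} (V : Submodule ℝ H) (Λ : H →L[ℝ] EuclideanSpace ℝ (Fin m))
    (hVker : V ⊓ LinearMap.ker (Λ : H →ₗ[ℝ] EuclideanSpace ℝ (Fin m)) = ⊥)
    (ε η : ℝ) (hε : 0 < ε) (hη : 0 < η) :
    (sSup {t : ℝ | ∃ h : H,
        ‖(Submodule.orthogonalProjectionOnto Vᗮ h : H)‖ ≤ ε ∧ ‖Λ h‖ ≤ η ∧ t = ‖h‖}) ^ 2
      = sInf {v : ℝ | ∃ c d : ℝ, 0 ≤ c ∧ 0 ≤ d ∧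
          (∀ f : H, ‖f‖ ^ 2 ≤
            ⟪(c • (Vᗮ.subtypeL ∘L Submodule.orthogonalProjectionOnto Vᗮ)
              + d • (ContinuousLinearMap.adjoint Λ ∘L Λ)) f, f⟫) ∧
          v = c * ε ^ 2 + d * η ^ 2} := by
  haveI : CompleteSpace H := FiniteDimensional.complete ℝ H
  haveI : Nontrivial H := by
    have h0 : 0 < Module.finrank ℝ H := by omega
    exact Module.nontrivial_of_finrank_pos h0
  set P : H →L[ℝ] H := Vᗮ.subtypeL ∘L Submodule.orthogonalProjectionOnto Vᗮ with hPdef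
  set Q : H →L[ℝ] H := ContinuousLinearMap.adjoint Λ ∘L Λ with hQdef
  have hPapp : ∀ f : H, P f = (Submodule.orthogonalProjectionOnto Vᗮ f : H) := fun f => rfl
  -- inner product identities
  have hPin : ∀ f : H, ⟪P f, f⟫ = ‖(Submodule.orthogonalProjectionOnto Vᗮ f : H)‖^2 := by
    intro f
    rw [hPapp f]
    have h0 : ⟪f - (Submodule.orthogonalProjectionOnto Vᗮ f : H), (Submodule.orthogonalProjectionOnto Vᗮ f : H)⟫ = 0 :=
      Vᗮ.starProjection_inner_eq_zero f _ (SetLike.coe_mem _)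
    rw [inner_sub_left] at h0
    have h1 : ⟪f, ((Submodule.orthogonalProjectionOnto Vᗮ f : H))⟫
        = ⟪((Submodule.orthogonalProjectionOnto Vᗮ f : H)), ((Submodule.orthogonalProjectionOnto Vᗮ f : H))⟫ := by
      linarith [h0]
    rw [real_inner_comm, h1, real_inner_self_eq_norm_sq]
  have hQin : ∀ f : H, ⟪Q f, f⟫ = ‖Λ f‖^2 := by
    intro f
    have e : Q f = ContinuousLinearMap.adjoint Λ (Λ f) := rfl
    rw [e, ContinuousLinearMap.adjoint_inner_left, real_inner_self_eq_norm_sq]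
  have hInner : ∀ (c d : ℝ) (f : H), ⟪(c • P + d • Q) f, f⟫
      = c * ‖(Submodule.orthogonalProjectionOnto Vᗮ f : H)‖^2 + d * ‖Λ f‖^2 := by
    intro c d f
    rw [ContinuousLinearMap.add_apply, ContinuousLinearMap.smul_apply,
      ContinuousLinearMap.smul_apply, inner_add_left, real_inner_smul_left,
      real_inner_smul_left, hPin, hQin]
  -- the two scaled operators
  set B : H →L[ℝ] H := ε⁻¹ • P with hBdef
  set C : H →L[ℝ] EuclideanSpace ℝ (Fin m) := η⁻¹ • Λ with hCdef
  have hBn : ∀ x : H, ‖B x‖ = ε⁻¹ * ‖(Submodule.orthogonalProjectionOnto Vᗮ x : H)‖ := by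
    intro x
    rw [hBdef, ContinuousLinearMap.smul_apply, norm_smul, Real.norm_eq_abs, abs_inv,
      abs_of_pos hε, hPapp x]
  have hCn : ∀ x : H, ‖C x‖ = η⁻¹ * ‖Λ x‖ := by
    intro x
    rw [hCdef, ContinuousLinearMap.smul_apply, norm_smul, Real.norm_eq_abs, abs_inv,
      abs_of_pos hη]
  have hpos : ∀ x : H, x ≠ 0 → 0 < ‖B x‖^2 + ‖C x‖^2 := by
    intro x hx
    rcases (lt_or_eq_of_le (by positivity : (0:ℝ) ≤ ‖B x‖^2 + ‖C x‖^2)) with h | h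
    · exact h
    exfalso
    have hB0 : ‖B x‖ = 0 := by nlinarith [sq_nonneg ‖B x‖, sq_nonneg ‖C x‖, norm_nonneg (B x), norm_nonneg (C x)]
    have hC0 : ‖C x‖ = 0 := by nlinarith [sq_nonneg ‖B x‖, sq_nonneg ‖C x‖, norm_nonneg (B x), norm_nonneg (C x)]
    rw [hBn] at hB0
    rw [hCn] at hC0
    have hεne : ε⁻¹ ≠ 0 := inv_ne_zero hε.ne'
    have hηne : η⁻¹ ≠ 0 := inv_ne_zero hη.ne'
    have hP0 : ‖(Submodule.orthogonalProjectionOnto Vᗮ x : H)‖ = 0 := by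
      rcases mul_eq_zero.mp hB0 with h' | h'
      · exact absurd h' hεne
      · exact h'
    have hΛ0 : ‖Λ x‖ = 0 := by
      rcases mul_eq_zero.mp hC0 with h' | h'
      · exact absurd h' hηne
      · exact h'
    have hproj : Submodule.orthogonalProjectionOnto Vᗮ x = 0 := by
      have := norm_eq_zero.mp hP0
      exact_mod_cast this
    have hxV : x ∈ V := by
      have hmem : x ∈ Vᗮᗮ := Submodule.orthogonalProjectionOnto_eq_zero_iff.mp hproj
      rwa [Submodule.orthogonal_orthogonal] at hmem
    have hxK : x ∈ LinearMap.ker (Λ : H →ₗ[ℝ] EuclideanSpace ℝ (Fin m)) := by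
      simp only [LinearMap.mem_ker]
      exact norm_eq_zero.mp hΛ0
    have : x ∈ V ⊓ LinearMap.ker (Λ : H →ₗ[ℝ] EuclideanSpace ℝ (Fin m)) := ⟨hxV, hxK⟩
    rw [hVker] at this
    exact hx (by simpa using this)
  obtain ⟨t, μ, h, ht0, ht1, hμ, hh1, hGlobal, hBh, hCh⟩ := core B C hpos
  set sμ : ℝ := Real.sqrt μ with hsμdef
  have hsμ : 0 < sμ := Real.sqrt_pos.mpr hμ
  have hsq : sμ^2 = μ := Real.sq_sqrt hμ.le
  set h₀ : H := sμ⁻¹ • h with hh₀def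
  have hn₀ : ‖h₀‖ = sμ⁻¹ := by
    rw [hh₀def, norm_smul, Real.norm_eq_abs, abs_inv, abs_of_pos hsμ, hh1, mul_one]
  have hn₀sq : ‖h₀‖^2 = μ⁻¹ := by rw [hn₀, inv_pow, hsq]
  have hBh₀ : ‖B h₀‖ ≤ 1 := by
    have hBh' : ‖B h‖ ≤ sμ := by nlinarith [norm_nonneg (B h)]
    have e : B h₀ = sμ⁻¹ • B h := by rw [hh₀def, map_smul]
    rw [e, norm_smul, Real.norm_eq_abs, abs_inv, abs_of_pos hsμ]
    calc sμ⁻¹ * ‖B h‖ ≤ sμ⁻¹ * sμ := mul_le_mul_of_nonneg_left hBh' (by positivity)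
      _ = 1 := inv_mul_cancel₀ hsμ.ne'
  have hCh₀ : ‖C h₀‖ ≤ 1 := by
    have hCh' : ‖C h‖ ≤ sμ := by nlinarith [norm_nonneg (C h)]
    have e : C h₀ = sμ⁻¹ • C h := by rw [hh₀def, map_smul]
    rw [e, norm_smul, Real.norm_eq_abs, abs_inv, abs_of_pos hsμ]
    calc sμ⁻¹ * ‖C h‖ ≤ sμ⁻¹ * sμ := mul_le_mul_of_nonneg_left hCh' (by positivity)
      _ = 1 := inv_mul_cancel₀ hsμ.ne'
  have hPh₀ : ‖(Submodule.orthogonalProjectionOnto Vᗮ h₀ : H)‖ ≤ ε := by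
    have e := hBn h₀
    rw [e] at hBh₀
    calc ‖(Submodule.orthogonalProjectionOnto Vᗮ h₀ : H)‖
        = ε * (ε⁻¹ * ‖(Submodule.orthogonalProjectionOnto Vᗮ h₀ : H)‖) := by field_simp
      _ ≤ ε * 1 := mul_le_mul_of_nonneg_left hBh₀ hε.le
      _ = ε := mul_one ε
  have hΛh₀ : ‖Λ h₀‖ ≤ η := by
    have e := hCn h₀
    rw [e] at hCh₀
    calc ‖Λ h₀‖ = η * (η⁻¹ * ‖Λ h₀‖) := by field_simp
      _ ≤ η * 1 := mul_le_mul_of_nonneg_left hCh₀ hη.le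
      _ = η := mul_one η
  have hGr : IsGreatest {t' : ℝ | ∃ x : H,
      ‖(Submodule.orthogonalProjectionOnto Vᗮ x : H)‖ ≤ ε ∧ ‖Λ x‖ ≤ η ∧ t' = ‖x‖} sμ⁻¹ := by
    constructor
    · exact ⟨h₀, hPh₀, hΛh₀, hn₀.symm⟩
    · rintro t' ⟨x, hp, hq, rfl⟩
      have hglob := hGlobal x
      have hBx : ‖B x‖^2 ≤ 1 := by
        rw [hBn x]
        have h1 : ε⁻¹ * ‖(Submodule.orthogonalProjectionOnto Vᗮ x : H)‖ ≤ ε⁻¹ * ε :=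
          mul_le_mul_of_nonneg_left hp (by positivity)
        rw [inv_mul_cancel₀ hε.ne'] at h1
        nlinarith [mul_nonneg (by positivity : (0:ℝ) ≤ ε⁻¹)
          (norm_nonneg ((Submodule.orthogonalProjectionOnto Vᗮ x : H)))]
      have hCx : ‖C x‖^2 ≤ 1 := by
        rw [hCn x]
        have h1 : η⁻¹ * ‖Λ x‖ ≤ η⁻¹ * η := mul_le_mul_of_nonneg_left hq (by positivity)
        rw [inv_mul_cancel₀ hη.ne'] at h1
        nlinarith [mul_nonneg (by positivity : (0:ℝ) ≤ η⁻¹) (norm_nonneg (Λ x))]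
      have hx1 : μ * ‖x‖^2 ≤ 1 := by
        have e1 : t * ‖B x‖^2 ≤ t * 1 := mul_le_mul_of_nonneg_left hBx ht0
        have e2 : (1-t) * ‖C x‖^2 ≤ (1-t) * 1 := mul_le_mul_of_nonneg_left hCx (by linarith)
        linarith [hglob, e1, e2]
      have hfin : ‖x‖^2 ≤ (sμ⁻¹)^2 := by
        rw [inv_pow, hsq, inv_eq_one_div, le_div_iff₀ hμ]
        linarith [hx1]
      have hpos' : (0:ℝ) < sμ⁻¹ := inv_pos.mpr hsμ
      have hs := Real.sqrt_le_sqrt hfin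
      rwa [Real.sqrt_sq (norm_nonneg x), Real.sqrt_sq hpos'.le] at hs
  have hLe : IsLeast {v : ℝ | ∃ c d : ℝ, 0 ≤ c ∧ 0 ≤ d ∧
      (∀ f : H, ‖f‖ ^ 2 ≤ ⟪(c • P + d • Q) f, f⟫) ∧
      v = c * ε ^ 2 + d * η ^ 2} μ⁻¹ := by
    constructor
    · refine ⟨t / (ε^2 * μ), (1-t) / (η^2 * μ),
        div_nonneg ht0 (by positivity), div_nonneg (by linarith) (by positivity), ?_, ?_⟩
      · intro f
        rw [hInner]
        have hg := hGlobal f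
        have hBf : ‖B f‖^2 = ε⁻¹^2 * ‖(Submodule.orthogonalProjectionOnto Vᗮ f : H)‖^2 := by
          rw [hBn f, mul_pow]
        have hCf : ‖C f‖^2 = η⁻¹^2 * ‖Λ f‖^2 := by rw [hCn f, mul_pow]
        rw [hBf, hCf] at hg
        have key : ‖f‖^2 ≤ (t * (ε⁻¹^2 * ‖(Submodule.orthogonalProjectionOnto Vᗮ f : H)‖^2)
            + (1-t) * (η⁻¹^2 * ‖Λ f‖^2)) / μ := by
          rw [le_div_iff₀ hμ]
          linarith [hg]
        have eq2 : (t * (ε⁻¹^2 * ‖(Submodule.orthogonalProjectionOnto Vᗮ f : H)‖^2)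
            + (1-t) * (η⁻¹^2 * ‖Λ f‖^2)) / μ
            = t/(ε^2*μ) * ‖(Submodule.orthogonalProjectionOnto Vᗮ f : H)‖^2
              + (1-t)/(η^2*μ) * ‖Λ f‖^2 := by
          rw [add_div, aux_div _ _ _ _ hε.ne' hμ.ne', aux_div _ _ _ _ hη.ne' hμ.ne']
        rw [eq2] at key
        exact key
      · exact aux_val t ε η μ hε.ne' hη.ne' hμ.ne'
    · rintro v ⟨c, d, hc, hd, hfeas, rfl⟩
      have hf := hfeas h₀
      rw [hInner] at hf
      have h1 : ‖(Submodule.orthogonalProjectionOnto Vᗮ h₀ : H)‖^2 ≤ ε^2 :=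
        pow_le_pow_left₀ (norm_nonneg _) hPh₀ 2
      have h2 : ‖Λ h₀‖^2 ≤ η^2 := pow_le_pow_left₀ (norm_nonneg _) hΛh₀ 2
      rw [hn₀sq] at hf
      have m1 : c * ‖(Submodule.orthogonalProjectionOnto Vᗮ h₀ : H)‖^2 ≤ c * ε^2 :=
        mul_le_mul_of_nonneg_left h1 hc
      have m2 : d * ‖Λ h₀‖^2 ≤ d * η^2 := mul_le_mul_of_nonneg_left h2 hd
      linarith [hf, m1, m2]
  rw [hGr.csSup_eq, hLe.csInf_eq, inv_pow, hsq]
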